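/- For every n ≥ 1 and every permutation π ∈ Equiv.Perm (Fin n), consider the equivalence relation on ZMod (2n) (the vertices of the 2n-gon) generated by the pairs (i−1) ∼ (2n+1−π(i)) and i ∼ (2n−π(i)) for i = 1,…,n (all residues taken mod 2n); these pairs record the vertex identifications when the i-th black side of the polygon (oriented from vertex i−1 to vertex i) is glued, respecting orientation, to the π(i)-th grey side (oriented from vertex 2n+1−π(i) to vertex 2n−π(i)). Then the number of equivalence classes of this relation equals A(π), the number of alternating cycles of the cycle graph of π. -/

import Mathlib

/-- The permutation of `ZMod (n+1)` fixing `0` and acting as `π` on `{1,…,n}`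
(the element `i+1` of `ZMod (n+1)` corresponding to `i : Fin n`). -/
def pihat {n : ℕ} (π : Equiv.Perm (Fin n)) : Equiv.Perm (ZMod (n+1)) :=
  Equiv.Perm.decomposeFin.symm (0, π)

/-- The permutation `v ↦ π̂ (π̂⁻¹ (v+1) - 1)` of `ZMod (n+1)`, whose orbits are the
alternating cycles of the cycle graph of `π`. -/
def cpi {n : ℕ} (π : Equiv.Perm (Fin n)) : Equiv.Perm (ZMod (n+1)) :=
  (Equiv.addRight (1 : ZMod (n+1))).trans
    ((pihat π).symm.trans ((Equiv.subRight (1 : ZMod (n+1))).trans (pihat π)))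

/-- `A n π` is the number of alternating cycles of the cycle graph of `π`: the number of
orbits of the cyclic group generated by `cpi π` acting on `ZMod (n+1)`. -/
noncomputable def A (n : ℕ) (π : Equiv.Perm (Fin n)) : ℕ :=
  Nat.card (MulAction.orbitRel.Quotient (Subgroup.zpowers (cpi π)) (ZMod (n+1)))

/-- The relation on the vertices `ZMod (2n)` of the `2n`-gon recording the vertex
identifications when the `i`-th black side (from vertex `i-1` to vertex `i`, here `i = j+1`
for `j : Fin n`) is glued, respecting orientation, to the `π(i)`-th grey side
(from vertex `2n+1-π(i)` to vertex `2n-π(i)`). -/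
def glueRel {n : ℕ} (π : Equiv.Perm (Fin n)) (a b : ZMod (2*n)) : Prop :=
  ∃ j : Fin n,
    (a = ((j : ℕ) : ZMod (2*n)) ∧
      b = ((2*n+1 : ℕ) : ZMod (2*n)) - (((π j : ℕ) + 1 : ℕ) : ZMod (2*n))) ∨
    (a = (((j : ℕ) + 1 : ℕ) : ZMod (2*n)) ∧
      b = ((2*n : ℕ) : ZMod (2*n)) - (((π j : ℕ) + 1 : ℕ) : ZMod (2*n)))

namespace PGaux

variable {n : ℕ} (π : Equiv.Perm (Fin n))

/-- σ(x) = π̂⁻¹(π̂(x+1) - 1) -/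
def sig : Equiv.Perm (ZMod (n+1)) :=
  (Equiv.addRight (1 : ZMod (n+1))).trans
    ((pihat π).trans ((Equiv.subRight (1 : ZMod (n+1))).trans (pihat π).symm))

lemma sig_apply (x : ZMod (n+1)) : sig π x = (pihat π).symm (pihat π (x+1) - 1) := by
  simp only [sig, Equiv.trans_apply, Equiv.coe_addRight, Equiv.subRight_apply]
lemma cpi_apply (x : ZMod (n+1)) : cpi π x = pihat π ((pihat π).symm (x+1) - 1) := by
  simp only [cpi, Equiv.trans_apply, Equiv.coe_addRight, Equiv.subRight_apply]

lemma cpi_pihat_sig (x : ZMod (n+1)) : cpi π (pihat π (sig π x)) = pihat π x := by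
  simp [cpi_apply, sig_apply]

lemma pihat_zero : pihat π 0 = 0 :=
  Equiv.Perm.decomposeFin_symm_apply_zero 0 π

lemma zmod_cast_eq_fin (k : ℕ) (h : k < n+1) : ((k : ZMod (n+1))) = (⟨k, h⟩ : Fin (n+1)) :=
  Fin.ext (ZMod.val_cast_of_lt h)

lemma pihat_succ (j : Fin n) :
    pihat π (((j : ℕ) + 1 : ℕ) : ZMod (n+1)) = (((π j : ℕ) + 1 : ℕ) : ZMod (n+1)) := by
  rw [zmod_cast_eq_fin ((j:ℕ)+1) (by omega), zmod_cast_eq_fin ((π j:ℕ)+1) (by omega)]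
  have h1 : (⟨(j:ℕ)+1, by omega⟩ : Fin (n+1)) = Fin.succ j := rfl
  have h2 : (⟨(π j:ℕ)+1, by omega⟩ : Fin (n+1)) = Fin.succ (π j) := rfl
  rw [h1, h2]
  show Equiv.Perm.decomposeFin.symm (0, π) j.succ = _
  rw [Equiv.Perm.decomposeFin_symm_apply_succ]
  simp

lemma pihat_symm_succ (j : Fin n) :
    (pihat π).symm (((π j : ℕ) + 1 : ℕ) : ZMod (n+1)) = (((j : ℕ) + 1 : ℕ) : ZMod (n+1)) := by
  rw [← pihat_succ π j, Equiv.symm_apply_apply]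

lemma natCast_n_add_one : ((n : ℕ) : ZMod (n+1)) + 1 = 0 := by
  have h := ZMod.natCast_self (n+1)
  push_cast at h
  exact h

lemma conj_eq : pihat π * sig π * (pihat π)⁻¹ = (cpi π)⁻¹ := by
  ext x
  have h := cpi_pihat_sig π ((pihat π)⁻¹ x)
  have h2 : pihat π ((pihat π)⁻¹ x) = x := Equiv.apply_symm_apply _ _
  rw [h2] at h
  simp only [Equiv.Perm.mul_apply]
  exact (Equiv.Perm.eq_inv_iff_eq (f := cpi π)).mpr h |>.symm ▸ rfl

lemma sig_eq : sig π = (MulAut.conj (pihat π)⁻¹) (cpi π)⁻¹ := by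
  rw [MulAut.conj_apply, inv_inv, ← conj_eq]; group

lemma sig_zpow (k : ℤ) : (sig π) ^ k = (pihat π)⁻¹ * ((cpi π) ^ (-k)) * pihat π := by
  rw [sig_eq, ← map_zpow, MulAut.conj_apply, inv_inv, inv_zpow, ← zpow_neg]

lemma pihat_symm_cpi_zpow (k : ℤ) (x : ZMod (n+1)) :
    (pihat π).symm (((cpi π) ^ k) x) = ((sig π) ^ (-k)) ((pihat π).symm x) := by
  rw [sig_zpow, neg_neg, ← Equiv.Perm.inv_def]
  simp only [Equiv.Perm.mul_apply, Equiv.Perm.inv_def, Equiv.apply_symm_apply]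

/-- the black vertex of `ZMod (2n)` representing `u : ZMod (n+1)` -/
def gmap (u : ZMod (n+1)) : ZMod (2*n) := ((u.val : ℕ) : ZMod (2*n))

/-- the element of `ZMod (n+1)` representing the class of a vertex of the polygon -/
def fmap (v : ZMod (2*n)) : ZMod (n+1) :=
  if v.val ≤ n then ((v.val : ℕ) : ZMod (n+1))
  else (pihat π).symm (((2*n - v.val : ℕ)) : ZMod (n+1))

variable (hn : 1 ≤ n)
include hn

lemma fmap_coe_of_le (k : ℕ) (hk : k ≤ n) : fmap π ((k : ZMod (2*n))) = (k : ZMod (n+1)) := by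
  haveI : NeZero (2*n) := ⟨by omega⟩
  have hval : ((k : ZMod (2*n))).val = k := ZMod.val_cast_of_lt (by omega)
  simp [fmap, hval, hk]

omit hn in
lemma fmap_grey (k : ℕ) (h1 : n < k) (h2 : k < 2*n) :
    fmap π ((k : ZMod (2*n))) = (pihat π).symm ((2*n - k : ℕ) : ZMod (n+1)) := by
  haveI : NeZero (2*n) := ⟨by omega⟩
  have hval : ((k : ZMod (2*n))).val = k := ZMod.val_cast_of_lt h2
  simp [fmap, hval, Nat.not_le.mpr h1]

lemma fmap_gmap (u : ZMod (n+1)) : fmap π (gmap u) = u := by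
  have hu : u.val ≤ n := by have := ZMod.val_lt u; omega
  rw [gmap, fmap_coe_of_le π hn u.val hu]
  exact ZMod.natCast_rightInverse u

lemma sig_coe (j : Fin n) :
    sig π (((j:ℕ) : ZMod (n+1))) = (pihat π).symm (((π j : ℕ) : ℕ) : ZMod (n+1)) := by
  rw [sig_apply]
  have h1 : ((j:ℕ) : ZMod (n+1)) + 1 = (((j:ℕ)+1 : ℕ) : ZMod (n+1)) := by push_cast; ring
  rw [h1, pihat_succ]
  congr 1
  push_cast; ring

lemma key1 (j : Fin n) :
    fmap π (((2*n+1 : ℕ) : ZMod (2*n)) - (((π j : ℕ) + 1 : ℕ) : ZMod (2*n)))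
      = sig π (fmap π (((j:ℕ) : ZMod (2*n)))) := by
  have hp : (π j : ℕ) < n := (π j).isLt
  have hj : (j:ℕ) < n := j.isLt
  have hb : ((2*n+1 : ℕ) : ZMod (2*n)) - (((π j : ℕ)+1 : ℕ) : ZMod (2*n))
      = ((2*n - (π j : ℕ) : ℕ) : ZMod (2*n)) := by
    rw [Nat.cast_sub (by omega)]
    push_cast; ring
  rw [hb, fmap_coe_of_le π hn (j:ℕ) (by omega), sig_coe π hn j]
  by_cases hp0 : (π j : ℕ) = 0
  · rw [hp0]
    have h2n : ((2*n - 0 : ℕ) : ZMod (2*n)) = ((0:ℕ) : ZMod (2*n)) := by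
      simp [ZMod.natCast_self]
    rw [h2n, fmap_coe_of_le π hn 0 (by omega)]
    simp only [Nat.cast_zero]
    rw [← pihat_zero π, Equiv.symm_apply_apply]
    exact pihat_zero π
  · rw [fmap_grey π _ (by omega) (by omega)]
    congr 2
    omega

lemma key2 (j : Fin n) :
    fmap π (((2*n : ℕ) : ZMod (2*n)) - (((π j : ℕ) + 1 : ℕ) : ZMod (2*n)))
      = fmap π ((((j:ℕ)+1 : ℕ) : ZMod (2*n)))
    ∨ fmap π ((((j:ℕ)+1 : ℕ) : ZMod (2*n)))
      = sig π (fmap π (((2*n : ℕ) : ZMod (2*n)) - (((π j : ℕ) + 1 : ℕ) : ZMod (2*n)))) := by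
  have hp : (π j : ℕ) < n := (π j).isLt
  have hj : (j:ℕ) < n := j.isLt
  have hb : ((2*n : ℕ) : ZMod (2*n)) - (((π j : ℕ)+1 : ℕ) : ZMod (2*n))
      = ((2*n - ((π j : ℕ)+1) : ℕ) : ZMod (2*n)) := by
    rw [Nat.cast_sub (by omega)]
  by_cases hpn : (π j : ℕ) = n - 1
  · right
    have hbn : 2*n - ((π j : ℕ)+1) = n := by omega
    rw [hb, hbn, fmap_coe_of_le π hn n le_rfl, fmap_coe_of_le π hn ((j:ℕ)+1) (by omega)]
    rw [sig_apply, natCast_n_add_one, pihat_zero]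
    have h2 : (0 : ZMod (n+1)) - 1 = (((π j : ℕ) + 1 : ℕ) : ZMod (n+1)) := by
      have h3 : (π j : ℕ) + 1 = n := by omega
      rw [h3, eq_neg_of_add_eq_zero_left (natCast_n_add_one (n := n))]
      ring
    rw [h2, pihat_symm_succ]
  · left
    rw [hb, fmap_grey π _ (by omega) (by omega), fmap_coe_of_le π hn ((j:ℕ)+1) (by omega)]
    have h5 : 2*n - (2*n - ((π j : ℕ)+1)) = (π j : ℕ) + 1 := by omega
    rw [h5, pihat_symm_succ]

lemma rel_g_f (v : ZMod (2*n)) : Relation.EqvGen (glueRel π) v (gmap (fmap π v)) := by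
  haveI : NeZero (2*n) := ⟨by omega⟩
  by_cases hv : v.val ≤ n
  · rw [fmap, if_pos hv, gmap, ZMod.val_cast_of_lt (show v.val < n+1 by omega)]
    rw [show ((v.val : ℕ) : ZMod (2*n)) = v from ZMod.natCast_rightInverse v]
    exact Relation.EqvGen.refl v
  · push_neg at hv
    have hvlt : v.val < 2*n := ZMod.val_lt v
    have hv2 : v = ((v.val : ℕ) : ZMod (2*n)) := (ZMod.natCast_rightInverse v).symm
    set i0 : Fin n := π.symm ⟨2*n - v.val - 1, by omega⟩ with hi0
    have hπ : (π i0 : ℕ) = 2*n - v.val - 1 := by rw [hi0]; simp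
    have hf : fmap π v = (((i0:ℕ)+1 : ℕ) : ZMod (n+1)) := by
      conv_lhs => rw [hv2]
      rw [fmap_grey π v.val hv hvlt]
      have h6 : (2*n - v.val : ℕ) = (π i0 : ℕ) + 1 := by omega
      rw [h6, pihat_symm_succ]
    have hg : gmap (fmap π v) = (((i0:ℕ)+1 : ℕ) : ZMod (2*n)) := by
      rw [hf, gmap, ZMod.val_cast_of_lt (show (i0:ℕ)+1 < n+1 by omega)]
    have hrel : glueRel π (gmap (fmap π v)) v := by
      refine ⟨i0, Or.inr ⟨hg, ?_⟩⟩
      rw [← Nat.cast_sub (show (π i0 : ℕ) + 1 ≤ 2*n by omega)]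
      conv_lhs => rw [hv2]
      congr 1
      omega
    exact Relation.EqvGen.symm _ _ (Relation.EqvGen.rel _ _ hrel)

lemma step (x : ZMod (n+1)) : Relation.EqvGen (glueRel π) (gmap x) (gmap (sig π x)) := by
  haveI : NeZero (2*n) := ⟨by omega⟩
  have hx : x.val < n + 1 := ZMod.val_lt x
  have hxc : x = ((x.val : ℕ) : ZMod (n+1)) := (ZMod.natCast_rightInverse x).symm
  by_cases h : x.val < n
  · set j : Fin n := ⟨x.val, h⟩ with hjdef
    set b := ((2*n+1 : ℕ) : ZMod (2*n)) - (((π j : ℕ) + 1 : ℕ) : ZMod (2*n)) with hbdef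
    have hrel : glueRel π (gmap x) b := ⟨j, Or.inl ⟨rfl, rfl⟩⟩
    have h2 : Relation.EqvGen (glueRel π) b (gmap (fmap π b)) := rel_g_f π hn b
    have h3 : fmap π b = sig π x := by
      rw [hbdef, key1 π hn j, fmap_coe_of_le π hn (j:ℕ) (by omega)]
      congr 1
      exact hxc.symm
    rw [h3] at h2
    exact Relation.EqvGen.trans _ _ _ (Relation.EqvGen.rel _ _ hrel) h2
  · have hxn : x.val = n := by omega
    set jn : Fin n := π.symm ⟨n-1, by omega⟩ with hjn
    have hπ : (π jn : ℕ) = n - 1 := by rw [hjn]; simp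
    have hsig : sig π x = (((jn:ℕ)+1 : ℕ) : ZMod (n+1)) := by
      rw [sig_apply]
      have h1 : x + 1 = 0 := by rw [hxc, hxn]; exact natCast_n_add_one
      rw [h1, pihat_zero]
      have h2 : (0 : ZMod (n+1)) - 1 = (((π jn : ℕ) + 1 : ℕ) : ZMod (n+1)) := by
        rw [hπ]
        have h3 : ((n - 1 + 1 : ℕ) : ZMod (n+1)) = ((n:ℕ) : ZMod (n+1)) := by congr 1; omega
        rw [h3, eq_neg_of_add_eq_zero_left (natCast_n_add_one (n := n))]
        ring
      rw [h2, pihat_symm_succ]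
    have hrel : glueRel π (gmap (sig π x)) (gmap x) := by
      refine ⟨jn, Or.inr ⟨?_, ?_⟩⟩
      · rw [hsig, gmap, ZMod.val_cast_of_lt (show (jn:ℕ)+1 < n+1 by omega)]
      · rw [gmap, hxn, ← Nat.cast_sub (show (π jn : ℕ) + 1 ≤ 2*n by omega)]
        congr 1
        omega
    exact Relation.EqvGen.symm _ _ (Relation.EqvGen.rel _ _ hrel)

lemma step_zpow (k : ℤ) (x : ZMod (n+1)) :
    Relation.EqvGen (glueRel π) (gmap x) (gmap ((sig π ^ k) x)) := by
  induction k using Int.induction_on with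
  | zero => simpa using Relation.EqvGen.refl (gmap x)
  | succ k ih =>
      have hperm : sig π ^ ((k:ℤ)+1) = sig π * sig π ^ (k:ℤ) := by
        have hc : ((k:ℤ)+1) = 1 + (k:ℤ) := by ring
        rw [hc, zpow_one_add]
      have he : (sig π ^ ((k:ℤ)+1)) x = sig π ((sig π ^ (k:ℤ)) x) := by
        rw [hperm, Equiv.Perm.mul_apply]
      rw [he]
      exact Relation.EqvGen.trans _ _ _ ih (step π hn _)
  | pred k ih =>
      have hperm : sig π * sig π ^ (-(k:ℤ)-1) = sig π ^ (-(k:ℤ)) := by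
        rw [← zpow_one_add]
        congr 1
        ring
      have he : sig π ((sig π ^ (-(k:ℤ)-1)) x) = (sig π ^ (-(k:ℤ))) x := by
        rw [← Equiv.Perm.mul_apply, hperm]
      refine Relation.EqvGen.trans _ _ _ ih ?_
      refine Relation.EqvGen.symm _ _ ?_
      have hs := step π hn ((sig π ^ (-(k:ℤ)-1)) x)
      rw [he] at hs
      exact hs

lemma glue_orbit (a b : ZMod (2*n)) (h : glueRel π a b) :
    ∃ k : ℤ, ((cpi π) ^ k) (pihat π (fmap π a)) = pihat π (fmap π b) := by
  obtain ⟨j, ⟨ha, hb⟩ | ⟨ha, hb⟩⟩ := h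
  · refine ⟨-1, ?_⟩
    rw [ha, hb, key1 π hn j, zpow_neg_one,
      ← cpi_pihat_sig π (fmap π (((j:ℕ) : ZMod (2*n)))), Equiv.Perm.inv_def, Equiv.symm_apply_apply]
  · rcases key2 π hn j with h2 | h2
    · exact ⟨0, by rw [ha, hb, h2]; simp⟩
    · refine ⟨1, ?_⟩
      rw [ha, hb, h2, zpow_one]
      exact cpi_pihat_sig π _

omit hn in
lemma orb_eq (x y : ZMod (n+1)) (h : ∃ k : ℤ, ((cpi π)^k) x = y) :
    (⟦x⟧ : MulAction.orbitRel.Quotient (Subgroup.zpowers (cpi π)) (ZMod (n+1))) = ⟦y⟧ := by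
  obtain ⟨k, hk⟩ := h
  apply Quotient.sound
  refine MulAction.orbitRel_apply.mpr (MulAction.mem_orbit_iff.mpr ?_)
  refine ⟨⟨(cpi π)^(-k), Subgroup.mem_zpowers_iff.mpr ⟨-k, rfl⟩⟩, ?_⟩
  rw [← hk]
  show ((cpi π)^(-k)) • (((cpi π)^k) x) = x
  rw [Equiv.Perm.smul_def, ← Equiv.Perm.mul_apply, ← zpow_add]
  simp

lemma psi_aux (u w : ZMod (n+1))
    (h : (MulAction.orbitRel (Subgroup.zpowers (cpi π)) (ZMod (n+1))) u w) :
    Relation.EqvGen (glueRel π) (gmap ((pihat π).symm u)) (gmap ((pihat π).symm w)) := by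
  rw [MulAction.orbitRel_apply, MulAction.mem_orbit_iff] at h
  obtain ⟨⟨g, hg⟩, hgw⟩ := h
  obtain ⟨k, hk⟩ := Subgroup.mem_zpowers_iff.mp hg
  have hu : ((cpi π)^k) w = u := by
    rw [hk]
    exact hgw
  have h2 : (pihat π).symm u = ((sig π)^(-k)) ((pihat π).symm w) := by
    rw [← hu, pihat_symm_cpi_zpow]
  rw [h2]
  exact Relation.EqvGen.symm _ _ (step_zpow π hn (-k) ((pihat π).symm w))

end PGaux

theorem polygon_gluing_vertices_eq_alternating_cycles (n : ℕ) (hn : 1 ≤ n)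
    (π : Equiv.Perm (Fin n)) :
    Nat.card (Quotient (Relation.EqvGen.setoid (glueRel π))) = A n π := by
  have hΦ : ∀ a b : ZMod (2*n), Relation.EqvGen (glueRel π) a b →
      (⟦pihat π (PGaux.fmap π a)⟧ :
        MulAction.orbitRel.Quotient (Subgroup.zpowers (cpi π)) (ZMod (n+1)))
        = ⟦pihat π (PGaux.fmap π b)⟧ := by
    intro a b h
    induction h with
    | rel a b hab => exact PGaux.orb_eq π _ _ (PGaux.glue_orbit π hn a b hab)
    | refl a => rfl
    | symm a b _ ih => exact ih.symm
    | trans a b c _ _ ih1 ih2 => exact ih1.trans ih2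
  have hΨ : ∀ u w : ZMod (n+1),
      (MulAction.orbitRel (Subgroup.zpowers (cpi π)) (ZMod (n+1))) u w →
      (⟦PGaux.gmap ((pihat π).symm u)⟧ : Quotient (Relation.EqvGen.setoid (glueRel π)))
        = ⟦PGaux.gmap ((pihat π).symm w)⟧ :=
    fun u w h => Quotient.sound (PGaux.psi_aux π hn u w h)
  let Φ : Quotient (Relation.EqvGen.setoid (glueRel π)) →
      MulAction.orbitRel.Quotient (Subgroup.zpowers (cpi π)) (ZMod (n+1)) :=
    Quotient.lift (fun v => ⟦pihat π (PGaux.fmap π v)⟧) hΦ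
  let Ψ : MulAction.orbitRel.Quotient (Subgroup.zpowers (cpi π)) (ZMod (n+1)) →
      Quotient (Relation.EqvGen.setoid (glueRel π)) :=
    Quotient.lift (fun u => ⟦PGaux.gmap ((pihat π).symm u)⟧) hΨ
  have linv : ∀ q, Ψ (Φ q) = q := by
    intro q
    induction q using Quotient.inductionOn with
    | h v =>
      show (⟦PGaux.gmap ((pihat π).symm (pihat π (PGaux.fmap π v)))⟧ :
        Quotient (Relation.EqvGen.setoid (glueRel π))) = ⟦v⟧
      rw [Equiv.symm_apply_apply]
      exact Quotient.sound (Relation.EqvGen.symm _ _ (PGaux.rel_g_f π hn v))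
  have rinv : ∀ q, Φ (Ψ q) = q := by
    intro q
    induction q using Quotient.inductionOn with
    | h u =>
      show (⟦pihat π (PGaux.fmap π (PGaux.gmap ((pihat π).symm u)))⟧ :
        MulAction.orbitRel.Quotient (Subgroup.zpowers (cpi π)) (ZMod (n+1))) = ⟦u⟧
      rw [PGaux.fmap_gmap π hn, Equiv.apply_symm_apply]
  exact Nat.card_congr ⟨Φ, Ψ, linv, rinv⟩
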